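/- (Generalized Kakeya lemma, part (b)) Let X_1, X_2, X_3, … be finite subsets of [0,∞), each with at least two elements, such that ∑_n max X_n converges. With δ_n the smallest gap between consecutive elements of X_n and r_n := ∑_{k=n+1}^∞ (max X_k − min X_k), suppose r_n < δ_n holds for every sufficiently large n ∈ ℕ. Then the sumset { ∑_{n=1}^∞ x_n : x_n ∈ X_n for every n ∈ ℕ } is a closed subset of ℝ with empty interior. -/

import Mathlib

open Filter Topology

/-- The tail sumset starting at index `n`. -/
def kakeyaTail9 (X : ℕ → Finset ℝ) (n : ℕ) : Set ℝ :=
  {y : ℝ | ∃ x : ℕ → ℝ, (∀ k, x k ∈ X (n + k)) ∧ HasSum x y}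

lemma interior_union_empty9 {α : Type*} [TopologicalSpace α] {s t : Set α}
    (hs : IsClosed s) (h1 : interior s = ∅) (h2 : interior t = ∅) :
    interior (s ∪ t) = ∅ := by
  have ho : IsOpen (interior (s ∪ t) \ s) := isOpen_interior.sdiff hs
  have hsub : interior (s ∪ t) \ s ⊆ t :=
    fun x hx => (interior_subset hx.1).resolve_left hx.2
  have h3 : interior (s ∪ t) \ s ⊆ interior t := ho.subset_interior_iff.2 hsub
  rw [h2, Set.subset_empty_iff, Set.diff_eq_empty] at h3
  have h5 : interior (s ∪ t) ⊆ interior s := isOpen_interior.subset_interior_iff.2 h3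
  rw [h1, Set.subset_empty_iff] at h5
  exact h5

lemma interior_biUnion_empty9 {α : Type*} [TopologicalSpace α] {ι : Type*}
    {P : Set ι} (hP : P.Finite) (f : ι → Set α)
    (hcl : ∀ p ∈ P, IsClosed (f p)) (hint : ∀ p ∈ P, interior (f p) = ∅) :
    interior (⋃ p ∈ P, f p) = ∅ := by
  refine Set.Finite.induction_on (motive := fun s _ => (∀ p ∈ s, IsClosed (f p)) →
      (∀ p ∈ s, interior (f p) = ∅) → interior (⋃ p ∈ s, f p) = ∅) P hP
    (fun _ _ => by simp) ?_ hcl hint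
  intro a s _ _ ih hcl' hint'
  rw [Set.biUnion_insert]
  exact interior_union_empty9 (hcl' a (Set.mem_insert a s))
    (hint' a (Set.mem_insert a s))
    (ih (fun p hp => hcl' p (Set.mem_insert_of_mem _ hp))
      (fun p hp => hint' p (Set.mem_insert_of_mem _ hp)))

lemma kakeyaTail9_isClosed (X : ℕ → Finset ℝ) (M : ℕ → ℝ)
    (hXpos : ∀ n, ∀ a ∈ X n, (0 : ℝ) ≤ a)
    (hM : ∀ n, IsGreatest (X n : Set ℝ) (M n))
    (hsum : Summable M) (n : ℕ) :
    IsClosed (kakeyaTail9 X n) := by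
  have hsMs : Summable (fun k => M (n + k)) :=
    hsum.comp_injective (add_right_injective n)
  have hK : IsCompact (Set.pi Set.univ fun k => (X (n + k) : Set ℝ)) :=
    isCompact_univ_pi fun k => (X (n + k)).finite_toSet.isCompact
  have hcont : ContinuousOn (fun x : ℕ → ℝ => ∑' k, x k)
      (Set.pi Set.univ fun k => (X (n + k) : Set ℝ)) := by
    refine continuousOn_tsum (fun i => (continuous_apply i).continuousOn) hsMs ?_
    intro k x hx
    have hxk : x k ∈ X (n + k) := hx k (Set.mem_univ k)
    rw [Real.norm_eq_abs, abs_of_nonneg (hXpos _ _ hxk)]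
    exact (hM (n + k)).2 hxk
  have himg : kakeyaTail9 X n =
      (fun x : ℕ → ℝ => ∑' k, x k) '' (Set.pi Set.univ fun k => (X (n + k) : Set ℝ)) := by
    ext y
    constructor
    · rintro ⟨x, hx, hxs⟩
      exact ⟨x, fun k _ => hx k, hxs.tsum_eq⟩
    · rintro ⟨x, hx, rfl⟩
      have hx' : ∀ k, x k ∈ X (n + k) := fun k => hx k (Set.mem_univ k)
      have hxsum : Summable x :=
        Summable.of_nonneg_of_le (fun k => hXpos _ _ (hx' k))
          (fun k => (hM (n + k)).2 (hx' k)) hsMs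
      exact ⟨x, hx', hxsum.hasSum⟩
  rw [himg]
  exact (hK.image_of_continuousOn hcont).isClosed

lemma kakeyaTail9_rec (X : ℕ → Finset ℝ) (n : ℕ) (y : ℝ) :
    y ∈ kakeyaTail9 X n ↔ ∃ a ∈ X n, y - a ∈ kakeyaTail9 X (n + 1) := by
  constructor
  · rintro ⟨x, hx, hxs⟩
    refine ⟨x 0, hx 0, fun k => x (k + 1), fun k => ?_, ?_⟩
    · have e : n + (k + 1) = n + 1 + k := by omega
      exact e ▸ hx (k + 1)
    · refine (hasSum_nat_add_iff 1).2 ?_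
      simpa using hxs
  · rintro ⟨a, ha, x', hx', hxs'⟩
    refine ⟨fun k => Nat.casesOn k a fun j => x' j, fun k => ?_, ?_⟩
    · cases k with
      | zero => exact ha
      | succ k =>
        have e : n + 1 + k = n + (k + 1) := by omega
        exact e ▸ hx' k
    · have h2 : HasSum (fun k => (fun k => Nat.casesOn k a fun j => x' j) (k + 1))
        (y - a) := hxs'
      have h3 := (hasSum_nat_add_iff 1).1 h2
      simpa using h3

lemma kakeyaTail9_covpair (X : ℕ → Finset ℝ) (n : ℕ) {a b : ℝ}
    (ha : a ∈ X n) (hb : b ∈ X n) (hab : a < b) :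
    ∃ a' b', a' ∈ X n ∧ b' ∈ X n ∧ a ≤ a' ∧ b' ≤ b ∧ a' < b' ∧
      ∀ c ∈ X n, c ≤ a' ∨ b' ≤ c := by
  classical
  set s := (X n).filter (fun c => a ≤ c ∧ c < b) with hs
  have hsne : s.Nonempty := ⟨a, by simp [hs, ha, hab]⟩
  set a' := s.max' hsne with ha'
  have ha's : a' ∈ s := s.max'_mem hsne
  rw [hs, Finset.mem_filter] at ha's
  have ha'X := ha's.1
  have haa' := ha's.2.1
  have ha'b := ha's.2.2
  set t := (X n).filter (fun c => a' < c ∧ c ≤ b) with ht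
  have htne : t.Nonempty := ⟨b, by simp [ht, hb, ha'b]⟩
  set b' := t.min' htne with hb'
  have hb't : b' ∈ t := t.min'_mem htne
  rw [ht, Finset.mem_filter] at hb't
  refine ⟨a', b', ha'X, hb't.1, haa', hb't.2.2, hb't.2.1, ?_⟩
  intro c hc
  by_cases hca : c ≤ a'
  · exact Or.inl hca
  · push_neg at hca
    by_cases hcb : c ≤ b
    · exact Or.inr (t.min'_le c (by rw [ht, Finset.mem_filter]; exact ⟨hc, hca, hcb⟩))
    · push_neg at hcb
      exact Or.inr (hb't.2.2.trans hcb.le)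

lemma kakeyaTail9_subset_Icc (X : ℕ → Finset ℝ) (M m : ℕ → ℝ)
    (hXpos : ∀ n, ∀ a ∈ X n, (0 : ℝ) ≤ a)
    (hM : ∀ n, IsGreatest (X n : Set ℝ) (M n))
    (hm : ∀ n, IsLeast (X n : Set ℝ) (m n))
    (hsum : Summable M) (n : ℕ) :
    kakeyaTail9 X n ⊆ Set.Icc (∑' k, m (n + k)) (∑' k, M (n + k)) := by
  have hsm : Summable m :=
    Summable.of_nonneg_of_le (fun k => hXpos k _ (hm k).1)
      (fun k => (hM k).2 (hm k).1) hsum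
  have hsMs : Summable (fun k => M (n + k)) := hsum.comp_injective (add_right_injective n)
  have hsms : Summable (fun k => m (n + k)) := hsm.comp_injective (add_right_injective n)
  rintro y ⟨x, hx, hxs⟩
  have hxsum : Summable x := hxs.summable
  constructor
  · rw [← hxs.tsum_eq]
    exact Summable.tsum_le_tsum (fun k => (hm (n + k)).2 (hx k)) hsms hxsum
  · rw [← hxs.tsum_eq]
    exact Summable.tsum_le_tsum (fun k => (hM (n + k)).2 (hx k)) hxsum hsMs

lemma kakeyaTail9_step (X : ℕ → Finset ℝ) (M m δ : ℕ → ℝ)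
    (hXpos : ∀ n, ∀ a ∈ X n, (0 : ℝ) ≤ a)
    (hM : ∀ n, IsGreatest (X n : Set ℝ) (M n))
    (hm : ∀ n, IsLeast (X n : Set ℝ) (m n))
    (hδ : ∀ n, IsLeast {d : ℝ | ∃ a ∈ X n, ∃ b ∈ X n, a < b ∧
        (∀ c ∈ X n, c ≤ a ∨ b ≤ c) ∧ d = b - a} (δ n))
    (hsum : Summable M) (n : ℕ)
    (hDlt : (∑' k : ℕ, (M (n + 1 + k) - m (n + 1 + k))) < δ n)
    (c d : ℝ) (hcd : c < d) (hsub : Set.Ioo c d ⊆ kakeyaTail9 X n) :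
    ∃ a, Set.Ioo (c - a) (d - a) ⊆ kakeyaTail9 X (n + 1) := by
  have hsm : Summable m :=
    Summable.of_nonneg_of_le (fun k => hXpos k _ (hm k).1)
      (fun k => (hM k).2 (hm k).1) hsum
  set tM : ℝ := ∑' k, M (n + 1 + k) with htM
  set tm : ℝ := ∑' k, m (n + 1 + k) with htm
  have hIcc : kakeyaTail9 X (n + 1) ⊆ Set.Icc tm tM :=
    kakeyaTail9_subset_Icc X M m hXpos hM hm hsum (n + 1)
  have hDeq : (∑' k : ℕ, (M (n + 1 + k) - m (n + 1 + k))) = tM - tm :=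
    Summable.tsum_sub (hsum.comp_injective (add_right_injective (n + 1)))
      (hsm.comp_injective (add_right_injective (n + 1)))
  rw [hDeq] at hDlt
  have key : ∀ y₁ y₂ a b : ℝ, y₁ ∈ Set.Ioo c d → y₂ ∈ Set.Ioo c d →
      a ∈ X n → b ∈ X n → y₁ - a ∈ kakeyaTail9 X (n + 1) →
      y₂ - b ∈ kakeyaTail9 X (n + 1) → a < b → False := by
    intro y₁ y₂ a b hy₁ hy₂ haX hbX hs₁ hs₂ hab
    obtain ⟨a', b', ha'X, hb'X, haa', hb'b, ha'b', hcov'⟩ :=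
      kakeyaTail9_covpair X n haX hbX hab
    have hδab : δ n ≤ b' - a' :=
      (hδ n).2 ⟨a', ha'X, b', hb'X, ha'b', hcov', rfl⟩
    set w : ℝ := (a' + tM + (b' + tm)) / 2 with hw
    have hgap : a' + tM < b' + tm := by linarith
    have hw1 : a' + tM < w := by rw [hw]; linarith
    have hw2 : w < b' + tm := by rw [hw]; linarith
    have hI₁ := hIcc hs₁
    have hI₂ := hIcc hs₂
    have hcw : c < w := by
      have := hI₁.2
      have := hy₁.1
      linarith
    have hwd : w < d := by
      have := hI₂.1
      have := hy₂.2
      linarith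
    obtain ⟨e, heX, hwe⟩ := (kakeyaTail9_rec X n w).1 (hsub ⟨hcw, hwd⟩)
    have hIe := hIcc hwe
    rcases hcov' e heX with he | he
    · have := hIe.2
      linarith
    · have := hIe.1
      linarith
  have hmid : (c + d) / 2 ∈ Set.Ioo c d := ⟨by linarith, by linarith⟩
  obtain ⟨a, haX, has⟩ := (kakeyaTail9_rec X n _).1 (hsub hmid)
  refine ⟨a, fun y hy => ?_⟩
  have hy' : y + a ∈ Set.Ioo c d := ⟨by linarith [hy.1], by linarith [hy.2]⟩
  obtain ⟨b, hbX, hbs⟩ := (kakeyaTail9_rec X n _).1 (hsub hy')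
  have hba : b = a := by
    rcases lt_trichotomy a b with h | h | h
    · exact (key _ _ a b hmid hy' haX hbX has hbs h).elim
    · exact h.symm
    · exact (key _ _ b a hy' hmid hbX haX hbs has h).elim
  rw [hba] at hbs
  simpa using hbs

/-- Generalized Kakeya lemma, part (b). Here `δ n` is the smallest gap between consecutive
elements of `X n`. If `r n < δ n` holds for all sufficiently large `n`, then the sumset is a
closed set with empty interior. -/
theorem stmt9 (X : ℕ → Finset ℝ) (M m δ : ℕ → ℝ)
    (hXpos : ∀ n, ∀ a ∈ X n, (0 : ℝ) ≤ a)
    (hcard : ∀ n, 2 ≤ (X n).card)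
    (hM : ∀ n, IsGreatest (X n : Set ℝ) (M n))
    (hm : ∀ n, IsLeast (X n : Set ℝ) (m n))
    (hδ : ∀ n, IsLeast {d : ℝ | ∃ a ∈ X n, ∃ b ∈ X n, a < b ∧
        (∀ c ∈ X n, c ≤ a ∨ b ≤ c) ∧ d = b - a} (δ n))
    (hsum : Summable M)
    (hcond : ∀ᶠ n in atTop, (∑' k : ℕ, (M (n + 1 + k) - m (n + 1 + k))) < δ n) :
    IsClosed {y : ℝ | ∃ x : ℕ → ℝ, (∀ n, x n ∈ X n) ∧ HasSum x y} ∧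
      interior {y : ℝ | ∃ x : ℕ → ℝ, (∀ n, x n ∈ X n) ∧ HasSum x y} = ∅ := by
  classical
  obtain ⟨N, hN⟩ := eventually_atTop.1 hcond
  have hsm : Summable m :=
    Summable.of_nonneg_of_le (fun k => hXpos k _ (hm k).1)
      (fun k => (hM k).2 (hm k).1) hsum
  -- iterating the step lemma
  have hiter : ∀ j n, N ≤ n → ∀ c d : ℝ, c < d → Set.Ioo c d ⊆ kakeyaTail9 X n →
      ∃ c' d' : ℝ, d' - c' = d - c ∧ c' < d' ∧ Set.Ioo c' d' ⊆ kakeyaTail9 X (n + j) := by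
    intro j
    induction j with
    | zero => intro n _ c d hcd hsub; exact ⟨c, d, rfl, hcd, hsub⟩
    | succ j ih =>
      intro n hn c d hcd hsub
      obtain ⟨a, hsub'⟩ :=
        kakeyaTail9_step X M m δ hXpos hM hm hδ hsum n (hN n hn) c d hcd hsub
      obtain ⟨c', d', he, hlt, hs⟩ :=
        ih (n + 1) (hn.trans (Nat.le_succ n)) (c - a) (d - a) (by linarith) hsub'
      refine ⟨c', d', by rw [he]; ring, hlt, ?_⟩
      have e : n + 1 + j = n + (j + 1) := by omega
      exact e ▸ hs
  -- the tail set at level N has empty interior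
  have hintN : interior (kakeyaTail9 X N) = ∅ := by
    by_contra h
    obtain ⟨u, hu⟩ := Set.nonempty_iff_ne_empty.2 h
    have hmem : kakeyaTail9 X N ∈ nhds u := mem_interior_iff_mem_nhds.1 hu
    obtain ⟨ε, hε, hball⟩ := Metric.mem_nhds_iff.1 hmem
    rw [Real.ball_eq_Ioo] at hball
    have hDto : Tendsto (fun i => ∑' k, (M (i + k) - m (i + k))) atTop (𝓝 0) := by
      have h0 := tendsto_sum_nat_add (fun k => M k - m k)
      have he : (fun i => ∑' k, (M (i + k) - m (i + k)))
          = fun i => ∑' k, (M (k + i) - m (k + i)) := by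
        funext i; congr 1; funext k; rw [Nat.add_comm]
      rw [he]; exact h0
    have hcomp : Tendsto (fun j : ℕ => N + j) atTop atTop := by
      apply tendsto_atTop_atTop.2
      intro b; exact ⟨b, fun a ha => le_trans ha (Nat.le_add_left a N)⟩
    have hDto' : Tendsto (fun j => ∑' k, (M (N + j + k) - m (N + j + k))) atTop (𝓝 0) :=
      hDto.comp hcomp
    obtain ⟨j, hj⟩ := (hDto'.eventually (gt_mem_nhds hε)).exists
    have hcd : u - ε < u + ε := by linarith
    obtain ⟨c', d', hlen, hlt, hs⟩ := hiter j N le_rfl (u - ε) (u + ε) hcd hball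
    have hIcc := kakeyaTail9_subset_Icc X M m hXpos hM hm hsum (N + j)
    have hp1 : c' + (d' - c') / 4 ∈ Set.Ioo c' d' := ⟨by linarith, by linarith⟩
    have hp2 : d' - (d' - c') / 4 ∈ Set.Ioo c' d' := ⟨by linarith, by linarith⟩
    have h1 := hIcc (hs hp1)
    have h2 := hIcc (hs hp2)
    have hDeq : (∑' k : ℕ, (M (N + j + k) - m (N + j + k)))
        = (∑' k, M (N + j + k)) - (∑' k, m (N + j + k)) :=
      Summable.tsum_sub (hsum.comp_injective (add_right_injective (N + j)))
        (hsm.comp_injective (add_right_injective (N + j)))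
    rw [hDeq] at hj
    have hlen2 : d' - c' = 2 * ε := by rw [hlen]; ring
    linarith [h1.1, h2.2]
  have hS0 : {y : ℝ | ∃ x : ℕ → ℝ, (∀ n, x n ∈ X n) ∧ HasSum x y} = kakeyaTail9 X 0 := by
    ext y
    constructor
    · rintro ⟨x, hx, hxs⟩
      exact ⟨x, fun k => by simpa using hx k, hxs⟩
    · rintro ⟨x, hx, hxs⟩
      exact ⟨x, fun k => by simpa using hx k, hxs⟩
  constructor
  · rw [hS0]; exact kakeyaTail9_isClosed X M hXpos hM hsum 0
  · rw [hS0]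
    set P : Set ℝ := (fun g : Fin N → ℝ => ∑ k, g k) '' {g : Fin N → ℝ | ∀ k : Fin N, g k ∈ X (k : ℕ)}
      with hP
    have hPfin : P.Finite := by
      apply Set.Finite.image
      have he : {g : Fin N → ℝ | ∀ k : Fin N, g k ∈ X (k : ℕ)}
          = Set.pi Set.univ (fun k : Fin N => (X (k : ℕ) : Set ℝ)) := by
        ext g; simp [Set.mem_pi]
      rw [he]
      exact Set.Finite.pi fun k => (X (k : ℕ)).finite_toSet
    have hsubU : kakeyaTail9 X 0 ⊆ ⋃ p ∈ P, (fun y => p + y) '' kakeyaTail9 X N := by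
      rintro y ⟨x, hx, hxs⟩
      have hx' : ∀ k, x k ∈ X k := fun k => by simpa using hx k
      set p : ℝ := ∑ k ∈ Finset.range N, x k with hp
      have hpP : p ∈ P :=
        ⟨fun k : Fin N => x k, fun k => hx' k, by simpa [hp] using Fin.sum_univ_eq_sum_range x N⟩
      have htail : HasSum (fun k => x (k + N)) (y - p) := by
        refine (hasSum_nat_add_iff N).2 ?_
        simpa [hp] using hxs
      have hmem : y - p ∈ kakeyaTail9 X N := by
        refine ⟨fun k => x (N + k), fun k => hx' (N + k), ?_⟩
        have he : (fun k => x (N + k)) = fun k => x (k + N) := by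
          funext k; rw [Nat.add_comm]
        rw [he]; exact htail
      exact Set.mem_biUnion hpP ⟨y - p, hmem, by ring⟩
    have hintU : interior (⋃ p ∈ P, (fun y => p + y) '' kakeyaTail9 X N) = ∅ := by
      apply interior_biUnion_empty9 hPfin
      · intro p _
        have h1 : (fun y => p + y) '' kakeyaTail9 X N
            = (Homeomorph.addLeft p) '' kakeyaTail9 X N := rfl
        rw [h1]
        exact (Homeomorph.addLeft p).isClosedMap _ (kakeyaTail9_isClosed X M hXpos hM hsum N)
      · intro p _
        have h1 : (fun y => p + y) '' kakeyaTail9 X N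
            = (Homeomorph.addLeft p) '' kakeyaTail9 X N := rfl
        rw [h1, ← Homeomorph.image_interior, hintN, Set.image_empty]
    exact Set.eq_empty_of_subset_empty (hintU ▸ interior_mono hsubU)
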